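/- Let G = D_{4g} ⋉ (ℤ/2)² with r₁ acting trivially on (ℤ/2)² and r₂ swapping coordinates, a = (r₁r₂, 0), b = (r₂, e₁), c = a^{2g}b². Then the quotient of ⟨a, b⟩ by the central subgroup ⟨c⟩ is isomorphic to ⟨a, b | a^{4g} = b^4 = (ab)^2 = 1, b^2 = a^{2g}⟩, a group of order 8g. -/

import Mathlib

/-- Relators of `G₁ = ⟨a, b | a^(4g) = b⁴ = (ab)² = 1, b² = a^(2g)⟩`
(`0` is `a`, `1` is `b`). -/
def g1Rels (g : ℕ) : Set (FreeGroup (Fin 2)) :=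
  { (FreeGroup.of 0) ^ (4 * g),
    (FreeGroup.of 1) ^ 4,
    (FreeGroup.of 0 * FreeGroup.of 1) ^ 2,
    (FreeGroup.of 1) ^ 2 * ((FreeGroup.of 0) ^ (2 * g))⁻¹ }

/-- The Klein four group `(ℤ/2)²`, written multiplicatively. -/
abbrev V2 : Type := Multiplicative (ZMod 2) × Multiplicative (ZMod 2)

/-- `e₁ = (1,0) ∈ (ℤ/2)²`. -/
def e₁ : V2 := (Multiplicative.ofAdd 1, 1)

open DihedralGroup

/-- sign homomorphism on dihedral group -/
def dsign {n : ℕ} : DihedralGroup n →* Multiplicative (ZMod 2) where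
  toFun x := match x with
    | .r _ => 1
    | .sr _ => Multiplicative.ofAdd 1
  map_one' := rfl
  map_mul' x y := by
    rcases x with i | i <;> rcases y with j | j <;>
      simp [r_mul_r, r_mul_sr, sr_mul_r, sr_mul_sr] <;> decide

lemma dihedral_gen {n : ℕ} [NeZero n] :
    Subgroup.closure ({DihedralGroup.sr 0, DihedralGroup.sr 1} : Set (DihedralGroup n)) = ⊤ := by
  rw [eq_top_iff]
  intro x _
  have h0 : (DihedralGroup.sr 0 : DihedralGroup n) ∈ Subgroup.closure {DihedralGroup.sr 0, DihedralGroup.sr 1} :=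
    Subgroup.subset_closure (Set.mem_insert _ _)
  have h1 : (DihedralGroup.sr 1 : DihedralGroup n) ∈ Subgroup.closure {DihedralGroup.sr 0, DihedralGroup.sr 1} :=
    Subgroup.subset_closure (Set.mem_insert_of_mem _ rfl)
  have hr1 : (DihedralGroup.r 1 : DihedralGroup n) ∈ Subgroup.closure {DihedralGroup.sr 0, DihedralGroup.sr 1} := by
    have : (DihedralGroup.sr 0 : DihedralGroup n) * DihedralGroup.sr 1 = DihedralGroup.r 1 := by
      rw [sr_mul_sr]; norm_num
    exact this ▸ Subgroup.mul_mem _ h0 h1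
  have hri : ∀ i : ZMod n, (DihedralGroup.r i : DihedralGroup n) ∈ Subgroup.closure {DihedralGroup.sr 0, DihedralGroup.sr 1} := by
    intro i
    have : (DihedralGroup.r 1 : DihedralGroup n) ^ (i.val) = DihedralGroup.r i := by
      rw [r_one_pow, ZMod.natCast_val, ZMod.cast_id]
    exact this ▸ Subgroup.pow_mem _ hr1 _
  rcases x with i | i
  · exact hri i
  · have : (DihedralGroup.sr 0 : DihedralGroup n) * DihedralGroup.r i = DihedralGroup.sr i := by
      rw [sr_mul_r, zero_add]
    exact this ▸ Subgroup.mul_mem _ h0 (hri i)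

/-- The diagonal element `(1,1)` of `V2`. -/
def dd : V2 := (Multiplicative.ofAdd 1, Multiplicative.ofAdd 1)

/-- coordinate-product homomorphism -/
def ν : V2 →* Multiplicative (ZMod 2) := (MonoidHom.fst _ _) * (MonoidHom.snd _ _)

lemma ν_apply (v : V2) : ν v = v.1 * v.2 := rfl

/-- automorphisms preserving ν -/
def invHom : Subgroup (MulAut V2) where
  carrier := {f | ∀ v, ν (f v) = ν v}
  one_mem' := fun _ => rfl
  mul_mem' := @fun f g hf hg v => by
    have : (f * g) v = f (g v) := rfl
    rw [this, hf, hg]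
  inv_mem' := @fun f hf v => by
    have h2 : f (f⁻¹ v) = v := MulAut.apply_inv_self _ f v
    conv_rhs => rw [← h2, hf]

/-- automorphisms fixing dd -/
def fixDD : Subgroup (MulAut V2) where
  carrier := {f | f dd = dd}
  one_mem' := rfl
  mul_mem' := @fun f g hf hg => by
    show (f * g) dd = dd
    have h3 : (f * g) dd = f (g dd) := rfl
    rw [h3, show g dd = dd from hg, show f dd = dd from hf]
  inv_mem' := @fun f hf => by
    show f⁻¹ dd = dd
    conv_lhs => rw [← show f dd = dd from hf]
    exact MulAut.inv_apply_self _ f dd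

section Phi

variable {g : ℕ} (hg : 2 ≤ g) (φ : DihedralGroup (4 * g) →* MulAut V2)
    (h0 : φ (DihedralGroup.sr 0) = 1)
    (h1 : φ (DihedralGroup.sr 1) = (MulEquiv.prodComm : V2 ≃* V2))

include hg h0 h1

lemma phi_mem (H : Subgroup (MulAut V2)) (hm0 : (1 : MulAut V2) ∈ H)
    (hm1 : ((MulEquiv.prodComm : V2 ≃* V2) : MulAut V2) ∈ H) (d : DihedralGroup (4 * g)) :
    φ d ∈ H := by
  haveI : NeZero (4 * g) := ⟨by omega⟩
  have : Subgroup.comap φ H = ⊤ := by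
    rw [eq_top_iff, ← dihedral_gen, Subgroup.closure_le]
    rintro x (rfl | rfl)
    · simpa [Subgroup.mem_comap, h0] using hm0
    · simpa [Subgroup.mem_comap, h1] using hm1
  exact Subgroup.mem_comap.mp (this ▸ Subgroup.mem_top d)

lemma phi_ν (d : DihedralGroup (4 * g)) (v : V2) : ν (φ d v) = ν v := by
  refine phi_mem hg φ h0 h1 invHom (fun _ => rfl) ?_ d v
  intro w
  show ν (w.2, w.1) = ν w
  simp [ν_apply, mul_comm]

lemma phi_dd (d : DihedralGroup (4 * g)) : φ d dd = dd := by
  refine phi_mem hg φ h0 h1 fixDD rfl ?_ d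
  rfl

end Phi

section GComp

variable {g : ℕ} (φ : DihedralGroup (4 * g) →* MulAut V2)

/-- the element a -/
def aa : V2 ⋊[φ] DihedralGroup (4 * g) := ⟨1, DihedralGroup.r 1⟩

/-- the element b -/
def bb : V2 ⋊[φ] DihedralGroup (4 * g) := ⟨e₁, DihedralGroup.sr 1⟩

lemma mk_mul (v w : V2) (d e : DihedralGroup (4 * g)) :
    (⟨v, d⟩ * ⟨w, e⟩ : V2 ⋊[φ] DihedralGroup (4 * g)) = ⟨v * φ d w, d * e⟩ :=
  SemidirectProduct.mul_def _ _

lemma aa_pow (k : ℕ) : (aa φ) ^ k = ⟨1, DihedralGroup.r (k : ZMod (4 * g))⟩ := by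
  induction k with
  | zero =>
    rw [pow_zero]
    exact SemidirectProduct.ext rfl (by rw [Nat.cast_zero]; exact DihedralGroup.one_def)
  | succ k ih =>
    rw [pow_succ, ih, aa, mk_mul, map_one, mul_one, DihedralGroup.r_mul_r]
    push_cast
    rfl

variable (hg : 2 ≤ g) (h0 : φ (DihedralGroup.sr 0) = 1)
    (h1 : φ (DihedralGroup.sr 1) = (MulEquiv.prodComm : V2 ≃* V2))

include h1 in
lemma bb_sq : (bb φ) ^ 2 = ⟨dd, 1⟩ := by
  rw [sq, bb, mk_mul, h1]
  exact SemidirectProduct.ext (by show e₁ * (MulEquiv.prodComm : V2 ≃* V2) e₁ = dd; decide)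
    (by rw [DihedralGroup.sr_mul_sr, sub_self]; exact DihedralGroup.one_def.symm)

include hg h0 h1 in
lemma cc_eq : (aa φ) ^ (2 * g) * (bb φ) ^ 2 = ⟨dd, DihedralGroup.r ((2 * g : ℕ) : ZMod (4 * g))⟩ := by
  rw [aa_pow, bb_sq φ h1, mk_mul, phi_dd hg φ h0 h1, one_mul, mul_one]

include hg h0 h1 in
lemma phi_r2g : φ (DihedralGroup.r ((2 * g : ℕ) : ZMod (4 * g))) = 1 := by
  have hr1 : φ (DihedralGroup.r 1) = ((MulEquiv.prodComm : V2 ≃* V2) : MulAut V2) := by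
    have : (DihedralGroup.sr 0 : DihedralGroup (4 * g)) * DihedralGroup.sr 1 =
        DihedralGroup.r 1 := by rw [DihedralGroup.sr_mul_sr]; norm_num
    rw [← this, map_mul, h0, one_mul, h1]
  have h2 : ((MulEquiv.prodComm : V2 ≃* V2) : MulAut V2) ^ 2 = 1 := by
    rw [sq]
    ext v <;> simp
  calc φ (DihedralGroup.r ((2 * g : ℕ) : ZMod (4 * g)))
      = φ ((DihedralGroup.r 1) ^ (2 * g)) := by rw [DihedralGroup.r_one_pow]
    _ = (φ (DihedralGroup.r 1)) ^ (2 * g) := map_pow _ _ _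
    _ = (((MulEquiv.prodComm : V2 ≃* V2) : MulAut V2) ^ 2) ^ g := by
        rw [hr1, ← pow_mul]
    _ = 1 := by rw [h2, one_pow]

include hg h0 h1 in
lemma cc_comm_aa :
    (⟨dd, DihedralGroup.r ((2 * g : ℕ) : ZMod (4 * g))⟩ : V2 ⋊[φ] DihedralGroup (4 * g)) * aa φ
      = aa φ * ⟨dd, DihedralGroup.r ((2 * g : ℕ) : ZMod (4 * g))⟩ := by
  rw [aa, mk_mul, mk_mul, map_one, mul_one, one_mul, phi_dd hg φ h0 h1,
    DihedralGroup.r_mul_r, DihedralGroup.r_mul_r, add_comm]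

include hg h0 h1 in
lemma cc_comm_bb :
    (⟨dd, DihedralGroup.r ((2 * g : ℕ) : ZMod (4 * g))⟩ : V2 ⋊[φ] DihedralGroup (4 * g)) * bb φ
      = bb φ * ⟨dd, DihedralGroup.r ((2 * g : ℕ) : ZMod (4 * g))⟩ := by
  rw [bb, mk_mul, mk_mul, phi_r2g φ hg h0 h1, h1, DihedralGroup.r_mul_sr,
    DihedralGroup.sr_mul_r]
  have hz : ((2 * g : ℕ) : ZMod (4 * g)) + ((2 * g : ℕ) : ZMod (4 * g)) = 0 := by
    rw [← Nat.cast_add]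
    have h4 : ((4 * g : ℕ) : ZMod (4 * g)) = 0 := ZMod.natCast_self _
    rw [show 2 * g + 2 * g = 4 * g by ring, h4]
  refine SemidirectProduct.ext
    (by show dd * (1 : MulAut V2) e₁ = e₁ * (MulEquiv.prodComm : V2 ≃* V2) dd; decide) ?_
  show DihedralGroup.sr _ = DihedralGroup.sr _
  congr 1
  linear_combination -hz

include hg h0 h1 in
lemma cc_sq :
    (⟨dd, DihedralGroup.r ((2 * g : ℕ) : ZMod (4 * g))⟩ : V2 ⋊[φ] DihedralGroup (4 * g)) ^ 2 = 1 := by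
  rw [sq, mk_mul, phi_r2g φ hg h0 h1, DihedralGroup.r_mul_r]
  have hz : ((2 * g : ℕ) : ZMod (4 * g)) + ((2 * g : ℕ) : ZMod (4 * g)) = 0 := by
    rw [← Nat.cast_add, show 2 * g + 2 * g = 4 * g by ring, ZMod.natCast_self]
  rw [hz]
  exact SemidirectProduct.ext (by show dd * (1 : MulAut V2) dd = (1 : V2); decide)
    (DihedralGroup.one_def.symm ▸ rfl)

include h0 h1 in
lemma ab_sq : (aa φ * bb φ) ^ 2 = 1 := by
  have hr1 : φ (DihedralGroup.r 1) = ((MulEquiv.prodComm : V2 ≃* V2) : MulAut V2) := by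
    have : (DihedralGroup.sr 0 : DihedralGroup (4 * g)) * DihedralGroup.sr 1 =
        DihedralGroup.r 1 := by rw [DihedralGroup.sr_mul_sr]; norm_num
    rw [← this, map_mul, h0, one_mul, h1]
  have hab : aa φ * bb φ = ⟨(1, Multiplicative.ofAdd 1), DihedralGroup.sr 0⟩ := by
    rw [aa, bb, mk_mul, hr1, DihedralGroup.r_mul_sr, sub_self, one_mul]
    rfl
  rw [sq, hab, mk_mul, h0, DihedralGroup.sr_mul_sr, sub_self]
  exact SemidirectProduct.ext
    (by show ((1, Multiplicative.ofAdd 1) : V2) * (1 : MulAut V2) ((1, Multiplicative.ofAdd 1) : V2) = (1 : V2); decide)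
    (DihedralGroup.one_def.symm ▸ rfl)

include hg in
lemma aa_pow_4g : (aa φ) ^ (4 * g) = 1 := by
  rw [aa_pow, ZMod.natCast_self]
  exact SemidirectProduct.ext rfl DihedralGroup.one_def.symm

include hg h0 h1 in
lemma bb_pow_4 : (bb φ) ^ 4 = 1 := by
  show (bb φ) ^ (2 * 2) = 1
  rw [pow_mul, bb_sq φ h1, sq, mk_mul, map_one]
  exact SemidirectProduct.ext (by show dd * (1 : MulAut V2) dd = (1 : V2); decide)
    (mul_one (1 : DihedralGroup (4 * g)))

end GComp

lemma dsign_r {n : ℕ} (i : ZMod n) : dsign (DihedralGroup.r i) = 1 := rfl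
lemma dsign_sr {n : ℕ} (i : ZMod n) : dsign (DihedralGroup.sr i) = Multiplicative.ofAdd 1 := rfl

section Mu

variable {g : ℕ} (φ : DihedralGroup (4 * g) →* MulAut V2)
    (hg : 2 ≤ g) (h0 : φ (DihedralGroup.sr 0) = 1)
    (h1 : φ (DihedralGroup.sr 1) = (MulEquiv.prodComm : V2 ≃* V2))

/-- parity homomorphism on the semidirect product -/
def μh : (V2 ⋊[φ] DihedralGroup (4 * g)) →* Multiplicative (ZMod 2) where
  toFun x := ν x.left * dsign x.right
  map_one' := by
    show ν 1 * dsign 1 = 1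
    rw [map_one, map_one, mul_one]
  map_mul' x y := by
    show ν (x.left * φ x.right y.left) * dsign (x.right * y.right)
      = ν x.left * dsign x.right * (ν y.left * dsign y.right)
    rw [map_mul, map_mul, phi_ν hg φ h0 h1, mul_mul_mul_comm]

lemma μh_apply (v : V2) (d : DihedralGroup (4 * g)) :
    μh φ hg h0 h1 ⟨v, d⟩ = ν v * dsign d := rfl

lemma bb_mul_aa_pow (k : ℕ) :
    bb φ * (aa φ) ^ k = ⟨e₁, DihedralGroup.sr (1 + (k : ZMod (4 * g)))⟩ := by
  rw [aa_pow, bb, mk_mul, map_one, mul_one, DihedralGroup.sr_mul_r]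

include h0 h1 in
lemma ab_eq : aa φ * bb φ = ⟨(1, Multiplicative.ofAdd 1), DihedralGroup.sr 0⟩ := by
  have hr1 : φ (DihedralGroup.r 1) = ((MulEquiv.prodComm : V2 ≃* V2) : MulAut V2) := by
    have : (DihedralGroup.sr 0 : DihedralGroup (4 * g)) * DihedralGroup.sr 1 =
        DihedralGroup.r 1 := by rw [DihedralGroup.sr_mul_sr]; norm_num
    rw [← this, map_mul, h0, one_mul, h1]
  rw [aa, bb, mk_mul, hr1, DihedralGroup.r_mul_sr, sub_self, one_mul]
  rfl

include h0 h1 in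
lemma ab_mul_aa_pow (k : ℕ) :
    aa φ * bb φ * (aa φ) ^ k
      = ⟨(1, Multiplicative.ofAdd 1), DihedralGroup.sr (k : ZMod (4 * g))⟩ := by
  rw [ab_eq φ h0 h1, aa_pow, mk_mul, DihedralGroup.sr_mul_r, zero_add]
  exact SemidirectProduct.ext (by rw [h0, MulAut.one_apply, mul_one]) rfl

include h1 in
lemma b2_mul_aa_pow (k : ℕ) :
    (bb φ) ^ 2 * (aa φ) ^ k = ⟨dd, DihedralGroup.r (k : ZMod (4 * g))⟩ := by
  rw [bb_sq φ h1, aa_pow, mk_mul, map_one, mul_one, one_mul]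

lemma S_eq : Subgroup.closure {aa φ, bb φ} = (μh φ hg h0 h1).ker := by
  haveI : NeZero (4 * g) := ⟨by omega⟩
  have haS : aa φ ∈ Subgroup.closure {aa φ, bb φ} :=
    Subgroup.subset_closure (Set.mem_insert _ _)
  have hbS : bb φ ∈ Subgroup.closure {aa φ, bb φ} :=
    Subgroup.subset_closure (Set.mem_insert_of_mem _ rfl)
  apply le_antisymm
  · rw [Subgroup.closure_le]
    rintro x (rfl | rfl)
    · show μh φ hg h0 h1 ⟨1, DihedralGroup.r 1⟩ ∈ ({1} : Set _)
      rw [Set.mem_singleton_iff, μh_apply, map_one, dsign_r, mul_one]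
    · show μh φ hg h0 h1 ⟨e₁, DihedralGroup.sr 1⟩ ∈ ({1} : Set _)
      rw [Set.mem_singleton_iff, μh_apply, dsign_sr]
      decide
  · rintro ⟨v, d⟩ hx
    have hx' : ν v * dsign d = 1 := hx
    rcases d with i | i
    · rw [dsign_r, mul_one] at hx'
      have hv : ∀ w : V2, ν w = 1 → w = 1 ∨ w = dd := by decide
      rcases hv v hx' with rfl | rfl
      · have : (⟨1, DihedralGroup.r i⟩ : V2 ⋊[φ] DihedralGroup (4 * g)) = (aa φ) ^ (i.val) := by
          rw [aa_pow, ZMod.natCast_val, ZMod.cast_id]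
        rw [this]
        exact pow_mem haS _
      · have : (⟨dd, DihedralGroup.r i⟩ : V2 ⋊[φ] DihedralGroup (4 * g))
            = (bb φ) ^ 2 * (aa φ) ^ (i.val) := by
          rw [b2_mul_aa_pow φ h1, ZMod.natCast_val, ZMod.cast_id]
        rw [this]
        exact mul_mem (pow_mem hbS _) (pow_mem haS _)
    · rw [dsign_sr] at hx'
      have hv : ∀ w : V2, ν w * Multiplicative.ofAdd 1 = 1
          → w = e₁ ∨ w = (1, Multiplicative.ofAdd 1) := by decide
      rcases hv v hx' with rfl | rfl
      · have : (⟨e₁, DihedralGroup.sr i⟩ : V2 ⋊[φ] DihedralGroup (4 * g))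
            = bb φ * (aa φ) ^ ((i - 1).val) := by
          rw [bb_mul_aa_pow, ZMod.natCast_val, ZMod.cast_id, add_sub_cancel]
        rw [this]
        exact mul_mem hbS (pow_mem haS _)
      · have : (⟨(1, Multiplicative.ofAdd 1), DihedralGroup.sr i⟩
            : V2 ⋊[φ] DihedralGroup (4 * g)) = aa φ * bb φ * (aa φ) ^ (i.val) := by
          rw [ab_mul_aa_pow φ h0 h1, ZMod.natCast_val, ZMod.cast_id]
        rw [this]
        exact mul_mem (mul_mem haS hbS) (pow_mem haS _)

end Mu

section Card

variable {g : ℕ} (φ : DihedralGroup (4 * g) →* MulAut V2)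
    (hg : 2 ≤ g) (h0 : φ (DihedralGroup.sr 0) = 1)
    (h1 : φ (DihedralGroup.sr 1) = (MulEquiv.prodComm : V2 ≃* V2))

/-- underlying equiv of the semidirect product with the direct product -/
def sdpEquiv : (V2 ⋊[φ] DihedralGroup (4 * g)) ≃ V2 × DihedralGroup (4 * g) where
  toFun x := (x.left, x.right)
  invFun p := ⟨p.1, p.2⟩
  left_inv _ := rfl
  right_inv _ := rfl

include hg in
lemma card_G : Nat.card (V2 ⋊[φ] DihedralGroup (4 * g)) = 32 * g := by
  haveI : NeZero (4 * g) := ⟨by omega⟩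
  rw [Nat.card_congr (sdpEquiv φ), Nat.card_prod, DihedralGroup.nat_card]
  have h4 : Nat.card V2 = 4 := by rw [Nat.card_eq_fintype_card]; rfl
  rw [h4]; ring

include hg h0 h1 in
lemma card_S : Nat.card (MonoidHom.ker (μh φ hg h0 h1)) = 16 * g := by
  haveI : NeZero (4 * g) := ⟨by omega⟩
  haveI : Finite (V2 ⋊[φ] DihedralGroup (4 * g)) := Finite.of_equiv _ (sdpEquiv φ).symm
  have hrange : (μh φ hg h0 h1).range = ⊤ := by
    rw [eq_top_iff]
    intro x _
    rcases (show ∀ y : Multiplicative (ZMod 2), y = 1 ∨ y = Multiplicative.ofAdd 1 by decide)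
        x with rfl | rfl
    · exact one_mem _
    · exact ⟨⟨e₁, DihedralGroup.r 0⟩, by rw [μh_apply, dsign_r]; decide⟩
  have hidx : (MonoidHom.ker (μh φ hg h0 h1)).index = 2 := by
    rw [Subgroup.index_ker, hrange, Subgroup.card_top, Nat.card_eq_fintype_card]
    rfl
  have hGc := Subgroup.card_mul_index (MonoidHom.ker (μh φ hg h0 h1))
  rw [hidx, card_G φ hg] at hGc
  omega

end Card

section P

variable (g : ℕ)

lemma mk_rel_one {α : Type*} (rels : Set (FreeGroup α)) {r : FreeGroup α} (h : r ∈ rels) :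
    PresentedGroup.mk rels r = 1 := by
  have : r ∈ Subgroup.normalClosure rels := Subgroup.subset_normalClosure h
  exact (QuotientGroup.eq_one_iff r).mpr this

local notation "A" => (PresentedGroup.of 0 : PresentedGroup (g1Rels g))
local notation "B" => (PresentedGroup.of 1 : PresentedGroup (g1Rels g))

lemma relA : A ^ (4 * g) = 1 := by
  have h := mk_rel_one (g1Rels g) (Set.mem_insert _ _)
  rwa [map_pow] at h

lemma relB : B ^ 4 = 1 := by
  have h := mk_rel_one (g1Rels g) (Set.mem_insert_of_mem _ (Set.mem_insert _ _))
  rwa [map_pow] at h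

lemma relAB : (A * B) ^ 2 = 1 := by
  have h := mk_rel_one (g1Rels g)
    (Set.mem_insert_of_mem _ (Set.mem_insert_of_mem _ (Set.mem_insert _ _)))
  rwa [map_pow, map_mul] at h

lemma relB2 : B ^ 2 = A ^ (2 * g) := by
  have h := mk_rel_one (g1Rels g)
    (Set.mem_insert_of_mem _ (Set.mem_insert_of_mem _ (Set.mem_insert_of_mem _ rfl)))
  rw [map_mul, map_inv, map_pow, map_pow] at h
  exact (mul_inv_eq_one.mp h)

lemma relBinv : B⁻¹ = A ^ (2 * g) * B := by
  refine inv_eq_of_mul_eq_one_right ?_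
  rw [← relB2, show B * (B ^ 2 * B) = B ^ 4 by group, relB]

lemma relBA : B * A = A⁻¹ * B⁻¹ := by
  have h1 : A * B * A * B = 1 := by
    rw [mul_assoc (A * B) _ _, ← sq, relAB]
  have h2 : B * A = A⁻¹ * (A * B * A * B) * B⁻¹ := by group
  rw [h1, mul_one] at h2
  exact h2

lemma relConj : B * A * B⁻¹ = A ^ (-(2 * (g : ℤ) + 1)) := by
  have hBB : B⁻¹ * B⁻¹ = (A ^ (2 * g))⁻¹ := by rw [← mul_inv_rev, ← sq, relB2]
  rw [relBA]
  calc A⁻¹ * B⁻¹ * B⁻¹ = A⁻¹ * (A ^ (2 * g))⁻¹ := by rw [mul_assoc, hBB]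
    _ = (A ^ (2 * g) * A)⁻¹ := by rw [mul_inv_rev]
    _ = (A ^ (2 * g + 1))⁻¹ := by rw [pow_succ]
    _ = A ^ (-(2 * (g : ℤ) + 1)) := by
        rw [← zpow_natCast, ← zpow_neg]
        norm_num

lemma relConjPow (j : ℤ) :
    B * A ^ j = A ^ ((-(2 * (g : ℤ) + 1)) * j) * B := by
  have h2 : B * A ^ j * B⁻¹ = (B * A * B⁻¹) ^ j := conj_zpow.symm
  rw [relConj, ← zpow_mul] at h2
  have := congrArg (· * B) h2
  simpa [mul_assoc] using this

/-- the subgroup of normal forms -/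
def WP : Subgroup (PresentedGroup (g1Rels g)) where
  carrier := {x | ∃ i : ℤ, x = A ^ i ∨ x = A ^ i * B}
  one_mem' := ⟨0, Or.inl (zpow_zero _).symm⟩
  mul_mem' := by
    rintro x y ⟨i, rfl | rfl⟩ ⟨j, rfl | rfl⟩
    · exact ⟨i + j, Or.inl (zpow_add _ i j).symm⟩
    · exact ⟨i + j, Or.inr (by rw [← mul_assoc, ← zpow_add])⟩
    · refine ⟨i + (-(2 * (g : ℤ) + 1)) * j, Or.inr ?_⟩
      rw [mul_assoc, relConjPow g j, ← mul_assoc, ← zpow_add]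
    · refine ⟨i + (-(2 * (g : ℤ) + 1)) * j + 2 * g, Or.inl ?_⟩
      have h : A ^ i * B * (A ^ j * B) = A ^ i * (B * A ^ j) * B := by group
      rw [h, relConjPow g j, ← mul_assoc, ← zpow_add, mul_assoc, ← sq, relB2,
        ← zpow_natCast, ← zpow_add]
      push_cast
      ring_nf
  inv_mem' := by
    rintro x ⟨i, rfl | rfl⟩
    · exact ⟨-i, Or.inl (zpow_neg _ i).symm⟩
    · refine ⟨2 * g + (-(2 * (g : ℤ) + 1)) * (-i), Or.inr ?_⟩
      rw [mul_inv_rev, relBinv, ← zpow_neg, mul_assoc, relConjPow g (-i), ← mul_assoc,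
        ← zpow_natCast, ← zpow_add]
      push_cast
      ring_nf

lemma WP_top (x : PresentedGroup (g1Rels g)) : x ∈ WP g := by
  have h := PresentedGroup.closure_range_of (g1Rels g)
  have hx : x ∈ Subgroup.closure (Set.range (PresentedGroup.of (rels := g1Rels g))) := by
    rw [h]; trivial
  refine Subgroup.closure_le (WP g) |>.mpr ?_ hx
  rintro _ ⟨i, rfl⟩
  fin_cases i
  · exact ⟨1, Or.inl (zpow_one _).symm⟩
  · exact ⟨0, Or.inr (by rw [zpow_zero, one_mul]; rfl)⟩

lemma P_card (hg : 2 ≤ g) :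
    Finite (PresentedGroup (g1Rels g)) ∧ Nat.card (PresentedGroup (g1Rels g)) ≤ 8 * g := by
  haveI : NeZero (4 * g) := ⟨by omega⟩
  set f : ZMod (4 * g) × Bool → PresentedGroup (g1Rels g) :=
    fun p => A ^ (p.1.val) * (if p.2 then B else 1) with hf
  have hred : ∀ i : ℤ, A ^ i = A ^ (((i : ZMod (4 * g))).val) := by
    intro i
    have hdvd : ((4 * g : ℕ) : ℤ) ∣ i - ((i : ZMod (4 * g)).val : ℤ) := by
      apply (ZMod.intCast_zmod_eq_zero_iff_dvd _ _).mp
      push_cast [ZMod.natCast_val, ZMod.cast_id]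
      ring
    obtain ⟨k, hk⟩ := hdvd
    have hi : i = ((i : ZMod (4 * g)).val : ℤ) + ((4 * g : ℕ) : ℤ) * k := by linarith
    conv_lhs => rw [hi]
    rw [zpow_add, zpow_mul, zpow_natCast, zpow_natCast, relA, one_zpow, mul_one]
  have hsurj : Function.Surjective f := by
    intro x
    rcases WP_top g x with ⟨i, rfl | rfl⟩
    · refine ⟨((i : ZMod (4 * g)), false), ?_⟩
      show A ^ (((i : ZMod (4 * g))).val) * (if false = true then B else 1) = A ^ i
      rw [if_neg (by decide), mul_one, ← hred]
    · refine ⟨((i : ZMod (4 * g)), true), ?_⟩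
      show A ^ (((i : ZMod (4 * g))).val) * (if true = true then B else 1) = A ^ i * B
      rw [if_pos rfl, ← hred]
  haveI : Finite (PresentedGroup (g1Rels g)) := Finite.of_surjective f hsurj
  refine ⟨this, ?_⟩
  calc Nat.card (PresentedGroup (g1Rels g)) ≤ Nat.card (ZMod (4 * g) × Bool) :=
        Nat.card_le_card_of_surjective f hsurj
    _ = 8 * g := by
        rw [Nat.card_prod, Nat.card_zmod, Nat.card_eq_fintype_card, Fintype.card_bool]
        ring

end P

/-- Let `G = D_{4g} ⋉ (ℤ/2)²` (with `r₁ = sr 0` acting trivially and `r₂ = sr 1`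
swapping the coordinates), `a = (r₁r₂, 0)`, `b = (r₂, e₁)` and `c = a^(2g) b²`.
Then `c` is central in `⟨a, b⟩`, and the quotient of `⟨a, b⟩` by the (normal)
subgroup generated by `c` is isomorphic to
`⟨a, b | a^(4g) = b⁴ = (ab)² = 1, b² = a^(2g)⟩`, a group of order `8g`. -/
theorem wiman_quotient_presentation (g : ℕ) (hg : 2 ≤ g)
    (φ : DihedralGroup (4 * g) →* MulAut V2)
    (h0 : φ (DihedralGroup.sr 0) = 1)
    (h1 : φ (DihedralGroup.sr 1) = (MulEquiv.prodComm : V2 ≃* V2)) :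
    let a : V2 ⋊[φ] DihedralGroup (4 * g) := ⟨1, DihedralGroup.r 1⟩
    let b : V2 ⋊[φ] DihedralGroup (4 * g) := ⟨e₁, DihedralGroup.sr 1⟩
    let S := Subgroup.closure {a, b}
    ∃ c : S, (c : V2 ⋊[φ] DihedralGroup (4 * g)) = a ^ (2 * g) * b ^ 2 ∧
      (∀ s : S, c * s = s * c) ∧
      Subgroup.normalClosure ({c} : Set S) = Subgroup.closure {c} ∧
      Nat.card (S ⧸ Subgroup.normalClosure ({c} : Set S)) = 8 * g ∧
      Nonempty ((S ⧸ Subgroup.normalClosure ({c} : Set S)) ≃*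
        PresentedGroup (g1Rels g)) := by
  intro a b S
  haveI : NeZero (4 * g) := ⟨by omega⟩
  haveI : Finite (V2 ⋊[φ] DihedralGroup (4 * g)) := Finite.of_equiv _ (sdpEquiv φ).symm
  have ha : a = aa φ := rfl
  have hb : b = bb φ := rfl
  have haS : a ∈ S := Subgroup.subset_closure (Set.mem_insert _ _)
  have hbS : b ∈ S := Subgroup.subset_closure (Set.mem_insert_of_mem _ rfl)
  set aS : S := ⟨a, haS⟩ with haSdef
  set bS : S := ⟨b, hbS⟩ with hbSdef
  set c : S := aS ^ (2 * g) * bS ^ 2 with hc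
  have hcoe : (c : V2 ⋊[φ] DihedralGroup (4 * g)) = a ^ (2 * g) * b ^ 2 := by
    rw [hc, Subgroup.coe_mul, SubmonoidClass.coe_pow, SubmonoidClass.coe_pow]
  have hcG : (c : V2 ⋊[φ] DihedralGroup (4 * g))
      = ⟨dd, DihedralGroup.r ((2 * g : ℕ) : ZMod (4 * g))⟩ := by
    rw [hcoe]
    exact cc_eq φ hg h0 h1
  -- centrality
  have hcomm : ∀ s : S, c * s = s * c := by
    intro s
    have hcent : Subgroup.closure {a, b} ≤ Subgroup.centralizer
        {(⟨dd, DihedralGroup.r ((2 * g : ℕ) : ZMod (4 * g))⟩ : V2 ⋊[φ] DihedralGroup (4 * g))} := by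
      rw [Subgroup.closure_le]
      rintro x (rfl | rfl) <;> rw [SetLike.mem_coe, Subgroup.mem_centralizer_iff] <;>
        rintro y (rfl : y = _)
      · exact cc_comm_aa φ hg h0 h1
      · exact cc_comm_bb φ hg h0 h1
    have hs := hcent s.2
    rw [Subgroup.mem_centralizer_iff] at hs
    apply Subtype.ext
    calc ((c * s : S) : V2 ⋊[φ] DihedralGroup (4 * g)) = (c : _) * (s : _) := rfl
      _ = (s : _) * (c : _) := by rw [hcG]; exact hs _ rfl
      _ = ((s * c : S) : _) := rfl
  -- normal closure equals closure
  haveI hnormal : (Subgroup.closure ({c} : Set S)).Normal := by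
    constructor
    intro n hn gS
    have hle : Subgroup.closure ({c} : Set S) ≤ Subgroup.center S := by
      rw [Subgroup.closure_le]
      rw [Set.singleton_subset_iff, SetLike.mem_coe, Subgroup.mem_center_iff]
      exact fun s => (hcomm s).symm
    have hcn := Subgroup.mem_center_iff.mp (hle hn) gS
    rw [hcn, mul_inv_cancel_right]
    exact hn
  have hncl : Subgroup.normalClosure ({c} : Set S) = Subgroup.closure {c} :=
    le_antisymm (Subgroup.normalClosure_le_normal Subgroup.subset_closure)
      Subgroup.closure_le_normalClosure
  -- cardinality of the quotient
  have hcardS : Nat.card S = 16 * g := by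
    have hSeq : S = (μh φ hg h0 h1).ker := S_eq φ hg h0 h1
    rw [hSeq]
    exact card_S φ hg h0 h1
  have hc2 : c ^ 2 = 1 := by
    apply Subtype.ext
    rw [SubmonoidClass.coe_pow, hcG, OneMemClass.coe_one]
    exact cc_sq φ hg h0 h1
  have hc1 : c ≠ 1 := by
    intro h
    have h2 : (c : V2 ⋊[φ] DihedralGroup (4 * g)) = ((1 : S) : V2 ⋊[φ] DihedralGroup (4 * g)) :=
      congrArg _ h
    rw [hcG, OneMemClass.coe_one] at h2
    have h3 := congrArg SemidirectProduct.right h2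
    have h3' : DihedralGroup.r ((2 * g : ℕ) : ZMod (4 * g)) = (1 : DihedralGroup (4 * g)) := h3
    rw [DihedralGroup.one_def] at h3'
    injection h3' with h4
    have h5 : (4 * g : ℕ) ∣ 2 * g := (ZMod.natCast_eq_zero_iff _ _).mp h4
    have h6 := Nat.le_of_dvd (by omega) h5
    omega
  have hord : orderOf c = 2 := orderOf_eq_prime hc2 hc1
  have hcardN : Nat.card (Subgroup.normalClosure ({c} : Set S)) = 2 := by
    rw [hncl, ← Subgroup.zpowers_eq_closure, Nat.card_zpowers, hord]
  have hcardQ : Nat.card (S ⧸ Subgroup.normalClosure ({c} : Set S)) = 8 * g := by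
    have hq := Subgroup.card_eq_card_quotient_mul_card_subgroup
      (Subgroup.normalClosure ({c} : Set S))
    rw [hcardS, hcardN] at hq
    omega
  refine ⟨c, hcoe, hcomm, hncl, hcardQ, ?_⟩
  -- the isomorphism
  set N := Subgroup.normalClosure ({c} : Set S) with hN
  let π : S →* S ⧸ N := QuotientGroup.mk' N
  set fgen : Fin 2 → S ⧸ N := fun i => if i = 0 then π aS else π bS with hfgen
  have haS4g : aS ^ (4 * g) = 1 := by
    apply Subtype.ext
    rw [SubmonoidClass.coe_pow, OneMemClass.coe_one]
    exact aa_pow_4g φ hg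
  have hbS4 : bS ^ 4 = 1 := by
    apply Subtype.ext
    rw [SubmonoidClass.coe_pow, OneMemClass.coe_one]
    exact bb_pow_4 φ hg h0 h1
  have habS : (aS * bS) ^ 2 = 1 := by
    apply Subtype.ext
    rw [SubmonoidClass.coe_pow, Subgroup.coe_mul, OneMemClass.coe_one]
    exact ab_sq φ h0 h1
  have hbA : bS ^ 2 * (aS ^ (2 * g))⁻¹ = c := by
    apply Subtype.ext
    rw [Subgroup.coe_mul, SubmonoidClass.coe_pow, Subgroup.coe_inv, SubmonoidClass.coe_pow,
      hcG, show ((bS : V2 ⋊[φ] DihedralGroup (4 * g))) = bb φ from rfl,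
      show ((aS : V2 ⋊[φ] DihedralGroup (4 * g))) = aa φ from rfl, bb_sq φ h1, aa_pow]
    have hinv : ((⟨1, DihedralGroup.r ((2 * g : ℕ) : ZMod (4 * g))⟩ :
        V2 ⋊[φ] DihedralGroup (4 * g)))⁻¹
        = ⟨1, DihedralGroup.r (-((2 * g : ℕ) : ZMod (4 * g)))⟩ := by
      refine SemidirectProduct.ext ?_ ?_
      · show (φ _) 1⁻¹ = 1
        rw [inv_one, map_one]
      · rfl
    rw [hinv, mk_mul, map_one, mul_one]
    refine SemidirectProduct.ext rfl ?_
    show DihedralGroup.r _ = DihedralGroup.r _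
    have hz : ((2 * g : ℕ) : ZMod (4 * g)) + ((2 * g : ℕ) : ZMod (4 * g)) = 0 := by
      rw [← Nat.cast_add, show 2 * g + 2 * g = 4 * g by ring, ZMod.natCast_self]
    congr 1
    linear_combination -hz
  have hcN : c ∈ N := Subgroup.subset_normalClosure rfl
  have hrels : ∀ r ∈ g1Rels g, FreeGroup.lift fgen r = 1 := by
    intro r hr
    have hf0 : fgen 0 = π aS := by rw [hfgen]; rfl
    have hf1 : fgen 1 = π bS := by rw [hfgen]; rfl
    simp only [g1Rels, Set.mem_insert_iff, Set.mem_singleton_iff] at hr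
    rcases hr with rfl | rfl | rfl | rfl
    · rw [map_pow, FreeGroup.lift_apply_of, hf0, ← map_pow, haS4g, map_one]
    · rw [map_pow, FreeGroup.lift_apply_of, hf1, ← map_pow, hbS4, map_one]
    · rw [map_pow, map_mul, FreeGroup.lift_apply_of, FreeGroup.lift_apply_of, hf0, hf1, ← map_mul,
        ← map_pow, habS, map_one]
    · rw [map_mul, map_inv, map_pow, map_pow, FreeGroup.lift_apply_of, FreeGroup.lift_apply_of, hf0, hf1,
        ← map_pow, ← map_pow, ← map_inv, ← map_mul, hbA]
      exact (QuotientGroup.eq_one_iff c).mpr hcN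
  let ψ : PresentedGroup (g1Rels g) →* S ⧸ N := PresentedGroup.toGroup hrels
  have hψ0 : ψ (PresentedGroup.of 0) = π aS := by
    rw [show ψ (PresentedGroup.of 0) = fgen 0 from PresentedGroup.toGroup.of hrels]
    rw [hfgen]; rfl
  have hψ1 : ψ (PresentedGroup.of 1) = π bS := by
    rw [show ψ (PresentedGroup.of 1) = fgen 1 from PresentedGroup.toGroup.of hrels]
    rw [hfgen]; rfl
  have hgen : Subgroup.closure ({aS, bS} : Set S) = ⊤ := by
    have hpre := Subgroup.closure_preimage_eq_top ({a, b} : Set (V2 ⋊[φ] DihedralGroup (4 * g)))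
    have hsets : ((Subgroup.closure {a, b}).subtype ⁻¹' {a, b} : Set S) = {aS, bS} := by
      ext x
      simp only [Set.mem_preimage, Subgroup.coe_subtype, Set.mem_insert_iff,
        Set.mem_singleton_iff]
      constructor
      · rintro (h | h)
        · exact Or.inl (Subtype.ext h)
        · exact Or.inr (Subtype.ext h)
      · rintro (rfl | rfl)
        · exact Or.inl rfl
        · exact Or.inr rfl
    rw [← hsets]
    exact hpre
  have hψsurj : Function.Surjective ψ := by
    rw [← MonoidHom.range_eq_top, eq_top_iff]
    intro q _
    obtain ⟨s, rfl⟩ := QuotientGroup.mk'_surjective N q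
    have hs : s ∈ Subgroup.closure ({aS, bS} : Set S) := hgen ▸ Subgroup.mem_top s
    have hle : Subgroup.closure ({aS, bS} : Set S) ≤ (MonoidHom.range ψ).comap π := by
      rw [Subgroup.closure_le]
      rintro x (rfl | rfl)
      · exact ⟨PresentedGroup.of 0, hψ0⟩
      · exact ⟨PresentedGroup.of 1, hψ1⟩
    exact hle hs
  obtain ⟨hfin, hcardP⟩ := P_card g hg
  haveI := hfin
  have hbij : Function.Bijective ψ := by
    refine hψsurj.bijective_of_nat_card_le ?_
    rw [hcardQ]
    exact hcardP
  exact ⟨(MulEquiv.ofBijective ψ hbij).symm⟩
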